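/- Let d ≥ 1 and P₀, ..., P_d ≥ 0 with Σ P_k = 1. Define H(h) = Σ_{k=0}^d P_k ((h+1)/2)^{d-k} h^k. Then for all h ∈ [0,1], (1-h)·H'(h)² - (1 - H(h))·(H'(h) - (1-h)·H''(h)) ≥ 0. -/

import Mathlib

namespace LemmaOne

/-- generic inner derivative form of `c * ((h+1)/2)^e * h^m` (divided by `c`). -/
noncomputable def inr (e m : ℕ) (x : ℝ) : ℝ :=
  (e : ℝ) / 2 * ((x + 1) / 2) ^ (e - 1) * x ^ m + (m : ℝ) * ((x + 1) / 2) ^ e * x ^ (m - 1)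

/-- second-derivative inner form. -/
noncomputable def d2f (d m : ℕ) (x : ℝ) : ℝ :=
  ((d - m : ℕ) : ℝ) / 2 * inr (d - m - 1) m x + (m : ℝ) * inr (d - m) (m - 1) x

lemma shape (e m : ℕ) (c : ℝ) (x : ℝ) :
    HasDerivAt (fun h : ℝ => c * ((h + 1) / 2) ^ e * h ^ m) (c * inr e m x) x := by
  have h1 : HasDerivAt (fun h : ℝ => (h + 1) / 2) (1 / 2) x := by
    simpa using ((hasDerivAt_id x).add_const (1 : ℝ)).div_const 2
  have h2 := (h1.fun_pow e).const_mul c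
  have h3 := h2.fun_mul (hasDerivAt_pow m x)
  refine h3.congr_deriv ?_
  simp only [inr]
  ring

lemma shape2 (d m : ℕ) (c : ℝ) (x : ℝ) :
    HasDerivAt (fun h : ℝ => c * inr (d - m) m h) (c * d2f d m x) x := by
  have h1 := shape (d - m - 1) m (((d - m : ℕ) : ℝ) / 2) x
  have h2 := shape (d - m) (m - 1) ((m : ℝ)) x
  have hf : (fun h : ℝ => (((d - m : ℕ) : ℝ) / 2 * ((h + 1) / 2) ^ (d - m - 1) * h ^ m)
      + ((m : ℝ) * ((h + 1) / 2) ^ (d - m) * h ^ (m - 1))) = fun h : ℝ => inr (d - m) m h := by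
    funext h; simp only [inr]
  have h12 := h1.fun_add h2
  rw [hf] at h12
  exact h12.const_mul c

variable (d : ℕ) (P : ℕ → ℝ)

lemma deriv1 (x : ℝ) :
    deriv (fun h : ℝ => ∑ k ∈ Finset.range (d + 1),
      P k * ((h + 1) / 2) ^ (d - k) * h ^ k) x
      = ∑ k ∈ Finset.range (d + 1), P k * inr (d - k) k x := by
  exact (HasDerivAt.fun_sum fun k _ => shape (d - k) k (P k) x).deriv

lemma deriv1' :
    deriv (fun h : ℝ => ∑ k ∈ Finset.range (d + 1),
      P k * ((h + 1) / 2) ^ (d - k) * h ^ k)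
      = fun x => ∑ k ∈ Finset.range (d + 1), P k * inr (d - k) k x :=
  funext fun x => deriv1 d P x

lemma deriv2 (x : ℝ) :
    deriv (deriv (fun h : ℝ => ∑ k ∈ Finset.range (d + 1),
      P k * ((h + 1) / 2) ^ (d - k) * h ^ k)) x
      = ∑ k ∈ Finset.range (d + 1), P k * d2f d k x := by
  rw [deriv1' d P]
  exact (HasDerivAt.fun_sum fun k _ => shape2 d k (P k) x).deriv


lemma br1 (e m : ℕ) (x : ℝ) :
    (x + 1) * x * inr e m x
      = ((x + 1) / 2) ^ e * x ^ m * ((e : ℝ) * x + (x + 1) * (m : ℝ)) := by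
  rcases e with _ | e <;> rcases m with _ | m <;>
    · simp only [inr, Nat.succ_sub_one, Nat.zero_sub, pow_zero, pow_succ]
      push_cast
      ring

lemma br2 (d m : ℕ) (hm : m ≤ d) (hd : 1 ≤ d) (x : ℝ) :
    ((x + 1) * x) ^ 2 * d2f d m x
      = ((x + 1) / 2) ^ (d - m) * x ^ m *
        (((d : ℝ) * x + m) ^ 2 + (x + 1) * x * d - (1 + 2 * x) * ((d : ℝ) * x + m)) := by
  rcases eq_or_lt_of_le hm with rfl | hlt
  · -- m = d (note: substitutes)
    obtain ⟨n, rfl⟩ : ∃ n, m = n + 1 := ⟨m - 1, by omega⟩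
    have b2 := br1 0 n x
    simp only [d2f, Nat.sub_self, Nat.cast_zero, zero_div, zero_mul, zero_add,
      Nat.add_sub_cancel]
    push_cast at b2 ⊢
    simp only [pow_zero, one_mul] at b2
    linear_combination ((x + 1) * x * ((n : ℝ) + 1)) * b2
  · obtain ⟨e, rfl⟩ : ∃ e, d = m + (e + 1) := ⟨d - m - 1, by omega⟩
    have key1 : m + (e + 1) - m = e + 1 := by omega
    have key2 : m + (e + 1) - m - 1 = e := by omega
    rcases m with _ | n
    · have b1 := br1 e 0 x
      simp only [d2f, key1, key2]
      push_cast at b1 ⊢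
      simp only [Nat.zero_sub, pow_zero, mul_zero, add_zero, mul_one, Nat.cast_zero,
        zero_mul] at b1 ⊢
      linear_combination ((x + 1) * x * ((e : ℝ) + 1) / 2) * b1
    · have b1 := br1 e (n + 1) x
      have b2 := br1 (e + 1) n x
      simp only [d2f, key1, key2, Nat.add_sub_cancel]
      push_cast at b1 b2 ⊢
      linear_combination ((x + 1) * x * ((e : ℝ) + 1) / 2) * b1
        + ((x + 1) * x * ((n : ℝ) + 1)) * b2


lemma one_sub_pow_le (t : ℝ) (h0 : 0 ≤ t) (h1 : t ≤ 1) (n : ℕ) :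
    1 - t ^ n ≤ n * (1 - t) := by
  induction n with
  | zero => simp
  | succ n ih =>
    have h2 : 0 ≤ 1 - t ^ n := by nlinarith [pow_le_one₀ h0 h1 (n := n)]
    push_cast
    rw [pow_succ]
    nlinarith [mul_le_mul_of_nonneg_left ih h0,
      mul_nonneg (mul_nonneg (Nat.cast_nonneg (α := ℝ) n) (sub_nonneg.2 h1)) (sub_nonneg.2 h1)]

lemma ub (d k : ℕ) (hk : k ≤ d) (x : ℝ) (h0 : 0 ≤ x) (h1 : x ≤ 1) :
    1 - ((x + 1) / 2) ^ (d - k) * x ^ k ≤ (d : ℝ) * (1 - x) := by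
  have ha0 : (0:ℝ) ≤ (x + 1) / 2 := by linarith
  have ha1 : (x + 1) / 2 ≤ 1 := by linarith
  have h2 := one_sub_pow_le _ ha0 ha1 (d - k)
  have h3 := one_sub_pow_le x h0 h1 k
  have hp1 : ((x + 1) / 2) ^ (d - k) ≤ 1 := pow_le_one₀ ha0 ha1
  have hp0 : (0:ℝ) ≤ ((x + 1) / 2) ^ (d - k) := pow_nonneg ha0 _
  have hq1 : x ^ k ≤ 1 := pow_le_one₀ h0 h1
  have hq0 : (0:ℝ) ≤ x ^ k := pow_nonneg h0 _
  have hcast : ((d - k : ℕ) : ℝ) = (d : ℝ) - k := by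
    rw [Nat.cast_sub hk]
  have hdk : (k : ℝ) ≤ (d : ℝ) := by exact_mod_cast hk
  nlinarith [mul_le_mul_of_nonneg_left h3 hp0,
    mul_nonneg hp0 (sub_nonneg.2 hq1)]

/-- Key lemma (N''): `(1-Y)(dx-d+2)x ≤ (1-x)(dx+k)Y` for `Y = ((x+1)/2)^(d-k) x^k`. -/
lemma key (x : ℝ) (h0 : 0 ≤ x) (h1 : x ≤ 1) :
    ∀ d k : ℕ, k ≤ d →
      (1 - ((x + 1) / 2) ^ (d - k) * x ^ k) * ((d : ℝ) * x - d + 2) * x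
        ≤ (1 - x) * ((d : ℝ) * x + k) * (((x + 1) / 2) ^ (d - k) * x ^ k) := by
  intro d
  induction d with
  | zero =>
    intro k hk
    have : k = 0 := Nat.le_zero.1 hk
    subst this
    simp
  | succ d ih =>
    intro k hk
    rcases k with _ | k
    · -- "a-step" from (d, 0)
      have IH := ih 0 (Nat.zero_le d)
      simp only [Nat.sub_zero, pow_zero, mul_one] at IH ⊢
      rw [pow_succ]
      push_cast
      set A : ℝ := ((x + 1) / 2) ^ d with hA
      have hA0 : 0 ≤ A := pow_nonneg (by linarith) _
      have iden :
          (1 - x) * (((d : ℝ) + 1) * x + 0) * (A * ((x + 1) / 2))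
            - (1 - A * ((x + 1) / 2)) * (((d : ℝ) + 1) * x - ((d : ℝ) + 1) + 2) * x
          = ((x + 1) / 2) * ((1 - x) * ((d : ℝ) * x + 0) * A
              - (1 - A) * ((d : ℝ) * x - d + 2) * x)
            + x * (1 - x) ^ 2 * d / 2 := by ring
      nlinarith [mul_nonneg (show (0:ℝ) ≤ (x+1)/2 by linarith)
          (sub_nonneg.2 IH),
        mul_nonneg (mul_nonneg h0 (sq_nonneg (1 - x))) (Nat.cast_nonneg d)]
    · -- "h-step" from (d, k)
      have hk' : k ≤ d := by omega
      have IH := ih k hk'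
      have hub := ub d k hk' x h0 h1
      have hpe : d + 1 - (k + 1) = d - k := by omega
      rw [hpe, pow_succ]
      push_cast
      set A : ℝ := ((x + 1) / 2) ^ (d - k) * x ^ k with hA
      have hA0 : 0 ≤ A := mul_nonneg (pow_nonneg (by linarith) _) (pow_nonneg h0 _)
      have iden :
          (1 - x) * (((d : ℝ) + 1) * x + ((k : ℝ) + 1)) * (((x+1)/2) ^ (d-k) * (x ^ k * x))
            - (1 - ((x+1)/2) ^ (d-k) * (x ^ k * x)) * (((d : ℝ) + 1) * x - ((d : ℝ) + 1) + 2) * x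
          = x * ((1 - x) * ((d : ℝ) * x + k) * A
              - (1 - A) * ((d : ℝ) * x - d + 2) * x)
            + x * (1 - x) * ((d : ℝ) * (1 - x) - (1 - A)) := by
        rw [hA]; ring
      nlinarith [mul_nonneg h0 (sub_nonneg.2 IH),
        mul_nonneg (mul_nonneg h0 (by linarith : (0:ℝ) ≤ 1 - x))
          (sub_nonneg.2 (by linarith [hub] : 1 - A ≤ (d : ℝ) * (1 - x)))]


set_option maxHeartbeats 4000000 in
lemma core (d : ℕ) (hd : 1 ≤ d) (j k : ℕ) (hj : j ≤ d) (hk : k ≤ d)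
    (x : ℝ) (hx0 : 0 < x) (hx1 : x < 1) :
    0 ≤ ((1 - x) * inr (d - j) j x * inr (d - k) k x
          - (1 - ((x + 1) / 2) ^ (d - j) * x ^ j) * (inr (d - k) k x - (1 - x) * d2f d k x))
        + ((1 - x) * inr (d - k) k x * inr (d - j) j x
          - (1 - ((x + 1) / 2) ^ (d - k) * x ^ k) * (inr (d - j) j x - (1 - x) * d2f d j x)) := by
  have hxne : x ≠ 0 := ne_of_gt hx0
  have hx1ne : x + 1 ≠ 0 := by linarith
  have hbx : (1:ℝ) - x > 0 := by linarith
  -- division forms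
  have c1 : inr (d - j) j x
      = ((x + 1) / 2) ^ (d - j) * x ^ j * ((d : ℝ) * x + j) / ((x + 1) * x) := by
    rw [eq_div_iff (by positivity)]
    have h := br1 (d - j) j x
    rw [Nat.cast_sub hj] at h
    linear_combination h
  have c2 : inr (d - k) k x
      = ((x + 1) / 2) ^ (d - k) * x ^ k * ((d : ℝ) * x + k) / ((x + 1) * x) := by
    rw [eq_div_iff (by positivity)]
    have h := br1 (d - k) k x
    rw [Nat.cast_sub hk] at h
    linear_combination h
  have c3 : d2f d j x
      = ((x + 1) / 2) ^ (d - j) * x ^ j *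
          (((d : ℝ) * x + j) ^ 2 + (x + 1) * x * d - (1 + 2 * x) * ((d : ℝ) * x + j))
        / ((x + 1) * x) ^ 2 := by
    rw [eq_div_iff (by positivity)]
    linear_combination br2 d j hj hd x
  have c4 : d2f d k x
      = ((x + 1) / 2) ^ (d - k) * x ^ k *
          (((d : ℝ) * x + k) ^ 2 + (x + 1) * x * d - (1 + 2 * x) * ((d : ℝ) * x + k))
        / ((x + 1) * x) ^ 2 := by
    rw [eq_div_iff (by positivity)]
    linear_combination br2 d k hk hd x
  have Kj := key x hx0.le hx1.le d j hj
  have Kk := key x hx0.le hx1.le d k hk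
  rw [c1, c2, c3, c4]
  set Yj : ℝ := ((x + 1) / 2) ^ (d - j) * x ^ j with hYj
  set Yk : ℝ := ((x + 1) / 2) ^ (d - k) * x ^ k with hYk
  -- basic facts about Yj, Yk
  have ha0 : (0:ℝ) < (x + 1) / 2 := by linarith
  have ha1 : (x + 1) / 2 < 1 := by linarith
  have hYj0 : 0 < Yj := by rw [hYj]; positivity
  have hYk0 : 0 < Yk := by rw [hYk]; positivity
  have hlt1 : ∀ m : ℕ, m ≤ d → ((x + 1) / 2) ^ (d - m) * x ^ m < 1 := by
    intro m hm
    rcases Nat.eq_zero_or_pos m with rfl | hm1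
    · simpa using pow_lt_one₀ ha0.le ha1 (by omega : d - 0 ≠ 0)
    · have h1 : x ^ m < 1 := pow_lt_one₀ hx0.le hx1 (by omega)
      have h2 : ((x + 1) / 2) ^ (d - m) ≤ 1 := pow_le_one₀ ha0.le ha1.le
      have h3 : (0:ℝ) < x ^ m := by positivity
      nlinarith
  have hYj1 : Yj < 1 := hlt1 j hj
  have hYk1 : Yk < 1 := hlt1 k hk
  -- abbreviations
  set Sj : ℝ := (1 - x) * ((d : ℝ) * x + j) with hSj
  set Sk : ℝ := (1 - x) * ((d : ℝ) * x + k) with hSk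
  set Pj : ℝ := Sj ^ 2 - (1 - x) ^ 2 * ((d : ℝ) * x ^ 2 + (j : ℝ) * (2 * x + 1)) with hPj
  set Pk : ℝ := Sk ^ 2 - (1 - x) ^ 2 * ((d : ℝ) * x ^ 2 + (k : ℝ) * (2 * x + 1)) with hPk
  have master :
      ((1 - x) * (Yj * ((d : ℝ) * x + j) / ((x + 1) * x)) * (Yk * ((d : ℝ) * x + k) / ((x + 1) * x))
        - (1 - Yj) * ((Yk * ((d : ℝ) * x + k) / ((x + 1) * x))
            - (1 - x) * (Yk * (((d : ℝ) * x + k) ^ 2 + (x + 1) * x * d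
                - (1 + 2 * x) * ((d : ℝ) * x + k)) / ((x + 1) * x) ^ 2)))
      + ((1 - x) * (Yk * ((d : ℝ) * x + k) / ((x + 1) * x)) * (Yj * ((d : ℝ) * x + j) / ((x + 1) * x))
        - (1 - Yk) * ((Yj * ((d : ℝ) * x + j) / ((x + 1) * x))
            - (1 - x) * (Yj * (((d : ℝ) * x + j) ^ 2 + (x + 1) * x * d
                - (1 + 2 * x) * ((d : ℝ) * x + j)) / ((x + 1) * x) ^ 2)))
      = (Yj * (1 - Yk) * (Pj - (x + 1) * x * Sj) + Yk * (1 - Yj) * (Pk - (x + 1) * x * Sk)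
          + 2 * Yj * Yk * Sj * Sk) / ((1 - x) * ((x + 1) * x) ^ 2) := by
    rw [hPj, hPk, hSj, hSk]
    field_simp
    ring
  rw [master]
  have hden : (0:ℝ) ≤ (1 - x) * ((x + 1) * x) ^ 2 :=
    mul_nonneg hbx.le (by positivity)
  apply div_nonneg _ hden
  -- positivity of the numerator
  have hjj : (0:ℝ) ≤ (j : ℝ) * ((j : ℝ) - 1) := by
    rcases Nat.eq_zero_or_pos j with rfl | h1
    · simp
    · have : (1:ℝ) ≤ (j : ℝ) := by exact_mod_cast h1
      nlinarith
  have hkk : (0:ℝ) ≤ (k : ℝ) * ((k : ℝ) - 1) := by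
    rcases Nat.eq_zero_or_pos k with rfl | h1
    · simp
    · have : (1:ℝ) ≤ (k : ℝ) := by exact_mod_cast h1
      nlinarith
  have hdj : (j:ℝ) ≤ (d:ℝ) := by exact_mod_cast hj
  have hdk : (k:ℝ) ≤ (d:ℝ) := by exact_mod_cast hk
  have hSj0 : 0 ≤ Sj := by rw [hSj]; positivity
  have hSk0 : 0 ≤ Sk := by rw [hSk]; positivity
  -- lower bound for Pj - (x+1)*x*Sj
  have hRj : -(Sj * x * ((d : ℝ) * x - d + 2)) ≤ Pj - (x + 1) * x * Sj := by
    have piid : Pj = ((d:ℝ) - 1) * (1 - x) * x * Sj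
        + (j : ℝ) * ((j : ℝ) - 1) * (x + 1) * (1 - x) ^ 2
        + ((d : ℝ) - (j : ℝ)) * (j : ℝ) * (1 - x) ^ 2 * x := by
      rw [hPj, hSj]; ring
    have iden : ((d:ℝ) - 1) * (1 - x) * x * Sj - (x + 1) * x * Sj
        = -(Sj * x * ((d : ℝ) * x - d + 2)) := by ring
    linarith [mul_nonneg (mul_nonneg hjj (by linarith : (0:ℝ) ≤ x + 1)) (sq_nonneg (1 - x)),
      mul_nonneg (mul_nonneg (mul_nonneg (by linarith : (0:ℝ) ≤ (d:ℝ) - j) (Nat.cast_nonneg j)) (sq_nonneg (1-x))) hx0.le]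
  have hRk : -(Sk * x * ((d : ℝ) * x - d + 2)) ≤ Pk - (x + 1) * x * Sk := by
    have piid : Pk = ((d:ℝ) - 1) * (1 - x) * x * Sk
        + (k : ℝ) * ((k : ℝ) - 1) * (x + 1) * (1 - x) ^ 2
        + ((d : ℝ) - (k : ℝ)) * (k : ℝ) * (1 - x) ^ 2 * x := by
      rw [hPk, hSk]; ring
    have iden : ((d:ℝ) - 1) * (1 - x) * x * Sk - (x + 1) * x * Sk
        = -(Sk * x * ((d : ℝ) * x - d + 2)) := by ring
    linarith [mul_nonneg (mul_nonneg hkk (by linarith : (0:ℝ) ≤ x + 1)) (sq_nonneg (1 - x)),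
      mul_nonneg (mul_nonneg (mul_nonneg (by linarith : (0:ℝ) ≤ (d:ℝ) - k) (Nat.cast_nonneg k)) (sq_nonneg (1-x))) hx0.le]
  -- key lemma in S-form
  have Kk' : (1 - Yk) * ((d : ℝ) * x - d + 2) * x ≤ Sk * Yk := by
    rw [hSk]; calc (1 - Yk) * ((d : ℝ) * x - d + 2) * x ≤ (1 - x) * ((d : ℝ) * x + k) * Yk := Kk
    _ = (1 - x) * ((d : ℝ) * x + k) * Yk := rfl
  have Kj' : (1 - Yj) * ((d : ℝ) * x - d + 2) * x ≤ Sj * Yj := by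
    rw [hSj]; exact Kj
  -- chain for the j-part
  have hA1 : Yj * (1 - Yk) * (-(Sj * x * ((d : ℝ) * x - d + 2)))
      ≤ Yj * (1 - Yk) * (Pj - (x + 1) * x * Sj) :=
    mul_le_mul_of_nonneg_left hRj (mul_nonneg hYj0.le (by linarith))
  have hA2 : -(Yj * Sj) * (Sk * Yk) ≤ Yj * (1 - Yk) * (-(Sj * x * ((d : ℝ) * x - d + 2))) := by
    have h5 : (Yj * Sj) * ((1 - Yk) * ((d : ℝ) * x - d + 2) * x) ≤ (Yj * Sj) * (Sk * Yk) :=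
      mul_le_mul_of_nonneg_left Kk' (mul_nonneg hYj0.le hSj0)
    have e : Yj * (1 - Yk) * (-(Sj * x * ((d : ℝ) * x - d + 2)))
        = -((Yj * Sj) * ((1 - Yk) * ((d : ℝ) * x - d + 2) * x)) := by ring
    rw [e]
    linarith [h5]
  have hB1 : Yk * (1 - Yj) * (-(Sk * x * ((d : ℝ) * x - d + 2)))
      ≤ Yk * (1 - Yj) * (Pk - (x + 1) * x * Sk) :=
    mul_le_mul_of_nonneg_left hRk (mul_nonneg hYk0.le (by linarith))
  have hB2 : -(Yk * Sk) * (Sj * Yj) ≤ Yk * (1 - Yj) * (-(Sk * x * ((d : ℝ) * x - d + 2))) := by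
    have h5 : (Yk * Sk) * ((1 - Yj) * ((d : ℝ) * x - d + 2) * x) ≤ (Yk * Sk) * (Sj * Yj) :=
      mul_le_mul_of_nonneg_left Kj' (mul_nonneg hYk0.le hSk0)
    have e : Yk * (1 - Yj) * (-(Sk * x * ((d : ℝ) * x - d + 2)))
        = -((Yk * Sk) * ((1 - Yj) * ((d : ℝ) * x - d + 2) * x)) := by ring
    rw [e]
    linarith [h5]
  have efin : (Yj * Sj) * (Sk * Yk) + (Yk * Sk) * (Sj * Yj) = 2 * Yj * Yk * Sj * Sk := by
    ring
  linarith [hA1, hA2, hB1, hB2]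


lemma cont_inr (e m : ℕ) : Continuous fun x : ℝ => inr e m x := by
  unfold inr; fun_prop

lemma cont_d2f (d m : ℕ) : Continuous fun x : ℝ => d2f d m x := by
  unfold d2f inr; fun_prop


end LemmaOne

open LemmaOne in
/-- Lemma 1 of the paper: for `d ≥ 1`, `P_k ≥ 0` with `Σ P_k = 1`, and
`H(h) = Σ_{k=0}^d P_k ((h+1)/2)^(d-k) h^k`, for all `h ∈ [0,1]` we have
`(1-h)H'(h)² - (1-H(h))(H'(h) - (1-h)H''(h)) ≥ 0`. -/
theorem lemma_one (d : ℕ) (hd : 1 ≤ d) (P : ℕ → ℝ) (hP : ∀ k, k ≤ d → 0 ≤ P k)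
    (hsum : ∑ k ∈ Finset.range (d + 1), P k = 1)
    (h : ℝ) (hh : h ∈ Set.Icc (0 : ℝ) 1) :
    (1 - h) *
        (deriv (fun h : ℝ => ∑ k ∈ Finset.range (d + 1),
          P k * ((h + 1) / 2) ^ (d - k) * h ^ k) h) ^ 2 -
      (1 - ∑ k ∈ Finset.range (d + 1), P k * ((h + 1) / 2) ^ (d - k) * h ^ k) *
        (deriv (fun h : ℝ => ∑ k ∈ Finset.range (d + 1),
            P k * ((h + 1) / 2) ^ (d - k) * h ^ k) h -
          (1 - h) * deriv (deriv (fun h : ℝ => ∑ k ∈ Finset.range (d + 1),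
            P k * ((h + 1) / 2) ^ (d - k) * h ^ k)) h) ≥ 0 := by
  obtain ⟨hh0, hh1⟩ := hh
  rw [deriv1 d P h, deriv2 d P h, ge_iff_le]
  set E : ℝ → ℝ := fun x =>
    (1 - x) * (∑ k ∈ Finset.range (d + 1), P k * inr (d - k) k x) ^ 2 -
      (1 - ∑ k ∈ Finset.range (d + 1), P k * ((x + 1) / 2) ^ (d - k) * x ^ k) *
        ((∑ k ∈ Finset.range (d + 1), P k * inr (d - k) k x) -
          (1 - x) * ∑ k ∈ Finset.range (d + 1), P k * d2f d k x) with hE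
  show 0 ≤ E h
  have hioo : ∀ x ∈ Set.Ioo (0:ℝ) 1, 0 ≤ E x := by
    rintro x ⟨hx0, hx1⟩
    have hexp : E x = ∑ j ∈ Finset.range (d + 1), ∑ k ∈ Finset.range (d + 1),
        P j * P k * ((1 - x) * inr (d - j) j x * inr (d - k) k x
          - (1 - ((x + 1) / 2) ^ (d - j) * x ^ j)
            * (inr (d - k) k x - (1 - x) * d2f d k x)) := by
      have sum2 : 1 - ∑ k ∈ Finset.range (d + 1), P k * ((x + 1) / 2) ^ (d - k) * x ^ k
          = ∑ j ∈ Finset.range (d + 1), P j * (1 - ((x + 1) / 2) ^ (d - j) * x ^ j) := by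
        rw [Finset.sum_congr rfl (fun j _ => by ring :
          ∀ j ∈ Finset.range (d + 1), P j * (1 - ((x + 1) / 2) ^ (d - j) * x ^ j)
            = P j - P j * ((x + 1) / 2) ^ (d - j) * x ^ j),
          Finset.sum_sub_distrib, hsum]
      have sum3 : (∑ k ∈ Finset.range (d + 1), P k * inr (d - k) k x)
            - (1 - x) * ∑ k ∈ Finset.range (d + 1), P k * d2f d k x
          = ∑ k ∈ Finset.range (d + 1),
              P k * (inr (d - k) k x - (1 - x) * d2f d k x) := by
        rw [Finset.mul_sum, ← Finset.sum_sub_distrib]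
        exact Finset.sum_congr rfl fun k _ => by ring
      rw [hE]
      simp only []
      rw [sum2, sum3, sq, Finset.sum_mul_sum, Finset.sum_mul_sum, Finset.mul_sum,
        ← Finset.sum_sub_distrib]
      refine Finset.sum_congr rfl fun j _ => ?_
      rw [Finset.mul_sum, ← Finset.sum_sub_distrib]
      exact Finset.sum_congr rfl fun k _ => by ring
    have hcomm : E x = ∑ j ∈ Finset.range (d + 1), ∑ k ∈ Finset.range (d + 1),
        P j * P k * ((1 - x) * inr (d - k) k x * inr (d - j) j x
          - (1 - ((x + 1) / 2) ^ (d - k) * x ^ k)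
            * (inr (d - j) j x - (1 - x) * d2f d j x)) := by
      rw [hexp, Finset.sum_comm]
      refine Finset.sum_congr rfl fun j _ => Finset.sum_congr rfl fun k _ => by ring
    have h2E : 2 * E x = ∑ j ∈ Finset.range (d + 1), ∑ k ∈ Finset.range (d + 1),
        P j * P k * (((1 - x) * inr (d - j) j x * inr (d - k) k x
          - (1 - ((x + 1) / 2) ^ (d - j) * x ^ j)
            * (inr (d - k) k x - (1 - x) * d2f d k x))
        + ((1 - x) * inr (d - k) k x * inr (d - j) j x
          - (1 - ((x + 1) / 2) ^ (d - k) * x ^ k)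
            * (inr (d - j) j x - (1 - x) * d2f d j x))) := by
      rw [two_mul]
      nth_rewrite 1 [hexp]
      nth_rewrite 1 [hcomm]
      rw [← Finset.sum_add_distrib]
      refine Finset.sum_congr rfl fun j _ => ?_
      rw [← Finset.sum_add_distrib]
      exact Finset.sum_congr rfl fun k _ => by ring
    have hpos : 0 ≤ 2 * E x := by
      rw [h2E]
      refine Finset.sum_nonneg fun j hj => Finset.sum_nonneg fun k hk => ?_
      have hj' : j ≤ d := Nat.lt_succ_iff.1 (Finset.mem_range.1 hj)
      have hk' : k ≤ d := Nat.lt_succ_iff.1 (Finset.mem_range.1 hk)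
      exact mul_nonneg (mul_nonneg (hP j hj') (hP k hk'))
        (core d hd j k hj' hk' x hx0 hx1)
    linarith
  have hcont : Continuous E := by
    rw [hE]
    have c1 : Continuous fun x : ℝ => ∑ k ∈ Finset.range (d + 1), P k * inr (d - k) k x :=
      continuous_finset_sum _ fun k _ => continuous_const.mul (cont_inr (d - k) k)
    have c2 : Continuous fun x : ℝ => ∑ k ∈ Finset.range (d + 1), P k * d2f d k x :=
      continuous_finset_sum _ fun k _ => continuous_const.mul (cont_d2f d k)
    have c0 : Continuous fun x : ℝ =>
        ∑ k ∈ Finset.range (d + 1), P k * ((x + 1) / 2) ^ (d - k) * x ^ k :=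
      continuous_finset_sum _ fun k _ => by fun_prop
    fun_prop
  have hsubset : Set.Icc (0:ℝ) 1 ⊆ {x : ℝ | 0 ≤ E x} := by
    rw [← closure_Ioo (zero_ne_one)]
    exact closure_minimal hioo (isClosed_le continuous_const hcont)
  exact hsubset ⟨hh0, hh1⟩
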